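/- Assume that the ℂ-linear extension ℂH → A of φ is injective. Then the ℂ-linear extension ι : ℂG → C(G,H,A) of the map w ↦ ι(w), where (ι(w)f)(g) = f(gw), is an injective homomorphism of ℂ-algebras. -/

import Mathlib

open scoped BigOperators

section Setup
variable {G : Type} [Group G] [Fintype G] {H : Subgroup G} [Fintype H]
variable {A : Type} [Ring A] [Algebra ℂ A]

/-- `Fun_H(G,A)`: the `H`-equivariant `A`-valued functions on `G`,
as a right `A`-module (i.e. a module over `Aᵐᵒᵖ`). -/
def FunH (φ : H →* Aˣ) : Submodule Aᵐᵒᵖ (G → A) where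
  carrier := {f | ∀ (h : H) (g : G), f (↑h * g) = (φ h : A) * f g}
  add_mem' := by
    intro f g hf hg h x
    simp only [Pi.add_apply, hf h x, hg h x, mul_add]
  zero_mem' := by intro h x; simp
  smul_mem' := by
    intro a f hf h x
    simp only [Pi.smul_apply, MulOpposite.smul_eq_mul_unop, hf h x, mul_assoc]

variable (φ : H →* Aˣ)

/-- `ι(w)`, the endomorphism `f ↦ (g ↦ f (g * w))` of the right `A`-module `Fun_H(G,A)`. -/
def iota (w : G) : Module.End Aᵐᵒᵖ (FunH (G := G) φ) where
  toFun f := ⟨fun g => (f : G → A) (g * w), fun h x => by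
    simpa only [mul_assoc] using f.2 h (x * w)⟩
  map_add' f₁ f₂ := rfl
  map_smul' a f := rfl

/-- `ι(e_G)` where `e_G = |G|⁻¹ ∑_{g ∈ G} g` is the symmetrizing idempotent of `ℂG`. -/
noncomputable def iotaEG : Module.End Aᵐᵒᵖ (FunH (G := G) φ) :=
  (Fintype.card G : ℂ)⁻¹ • ∑ g : G, iota φ g

/-- The idempotent `e_H = |H|⁻¹ ∑_{h ∈ H} φ(h) ∈ A`. -/
noncomputable def eH : A := (Fintype.card H : ℂ)⁻¹ • ∑ h : H, (φ h : A)

lemma phi_mul_eH (h : H) : (φ h : A) * eH φ = eH φ := by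
  unfold eH
  rw [mul_smul_comm, Finset.mul_sum]
  congr 1
  exact Fintype.sum_equiv (Equiv.mulLeft h) _ _ (fun x => by
    simp [Equiv.mulLeft, ← Units.val_mul])

/-- The element `δ ∈ Fun_H(G,A)`, the constant function with value `e_H`. -/
noncomputable def delta : FunH (G := G) φ := ⟨fun _ => eH φ, fun h g => (phi_mul_eH φ h).symm⟩

/-- `η(f)`: the right `A`-module endomorphism `h ↦ (w ↦ f(w) ⬝ ∑_{g ∈ G} h(g))`. -/
def eta (f : FunH (G := G) φ) : Module.End Aᵐᵒᵖ (FunH (G := G) φ) where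
  toFun h := ⟨fun w => (f : G → A) w * ∑ g : G, (h : G → A) g, fun hh x => by
    simp only []
    rw [f.2 hh x, mul_assoc]⟩
  map_add' h₁ h₂ := by
    ext w
    simp [Finset.sum_add_distrib, mul_add]
  map_smul' a h := by
    ext w
    simp [MulOpposite.smul_eq_mul_unop, ← Finset.sum_mul, mul_assoc]

/-- Right multiplication by a central element `z`, as an endomorphism of `Fun_H(G,A)`. -/
def rmul (z : A) (hz : z ∈ Set.center A) : Module.End Aᵐᵒᵖ (FunH (G := G) φ) where
  toFun f := ⟨fun w => (f : G → A) w * z, fun h x => by simp only []; rw [f.2 h x, mul_assoc]⟩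
  map_add' f₁ f₂ := by ext w; simp [add_mul]
  map_smul' a f := by
    ext w
    simp only [Submodule.coe_smul, Pi.smul_apply, MulOpposite.smul_eq_mul_unop,
      mul_assoc]
    rw [hz.comm]; rfl
  
end Setup

section Statements
variable {G : Type} [Group G] [Fintype G] {H : Subgroup G} [Fintype H]
variable {A : Type} [Ring A] [Algebra ℂ A]

/-- `ι` as a monoid homomorphism `G →* C(G,H,A)`. -/
def iotaMonoidHom (φ : H →* Aˣ) : G →* Module.End Aᵐᵒᵖ (FunH (G := G) φ) where
  toFun := iota φ
  map_one' := by
    refine LinearMap.ext fun f => Subtype.ext (funext fun g => ?_)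
    simp [iota, Module.End.one_apply]
  map_mul' w w' := by
    refine LinearMap.ext fun f => Subtype.ext (funext fun g => ?_)
    simp [iota, Module.End.mul_apply, mul_assoc]

/-- The `ℂ`-linear (algebra) extension `ι : ℂG → C(G,H,A)` of `w ↦ ι(w)`. -/
noncomputable def iotaHom (φ : H →* Aˣ) :
    MonoidAlgebra ℂ G →ₐ[ℂ] Module.End Aᵐᵒᵖ (FunH (G := G) φ) :=
  MonoidAlgebra.lift ℂ _ G (iotaMonoidHom φ)

open scoped Classical

/-- Auxiliary: the extension of `φ` by zero to `G`. -/
noncomputable def Phi (φ : H →* Aˣ) : G → A :=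
  fun w => if hm : w ∈ H then (φ ⟨w, hm⟩ : A) else 0

lemma Phi_mul (φ : H →* Aˣ) (h : H) (w : G) :
    Phi (G := G) φ (↑h * w) = (φ h : A) * Phi (G := G) φ w := by
  unfold Phi
  by_cases hm : w ∈ H
  · have hm' : (↑h : G) * w ∈ H := H.mul_mem h.2 hm
    rw [dif_pos hm, dif_pos hm']
    have : (⟨(↑h : G) * w, hm'⟩ : H) = h * ⟨w, hm⟩ := rfl
    rw [this, map_mul, Units.val_mul]
  · have hm' : (↑h : G) * w ∉ H := by
      intro hc
      have := H.mul_mem (H.inv_mem h.2) hc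
      rw [inv_mul_cancel_left] at this
      exact hm this
    rw [dif_neg hm, dif_neg hm', mul_zero]

/-- Auxiliary: test functions in `Fun_H(G,A)`. -/
noncomputable def testFun (φ : H →* Aˣ) (g₀ : G) : FunH (G := G) φ :=
  ⟨fun g => Phi (G := G) φ (g * g₀⁻¹), fun h g => by
    show Phi (G := G) φ (↑h * g * g₀⁻¹) = _
    rw [mul_assoc]; exact Phi_mul φ h (g * g₀⁻¹)⟩

/-- If the `ℂ`-linear extension `ℂH → A` of `φ` is injective, then the
`ℂ`-linear extension `ι : ℂG → C(G,H,A)` of `w ↦ ι(w)` is an injective homomorphism of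
`ℂ`-algebras. -/
theorem statement6 (φ : H →* Aˣ)
    (hφ : Function.Injective (MonoidAlgebra.lift ℂ A H ((Units.coeHom A).comp φ))) :
    Function.Injective (iotaHom (G := G) φ) := by
  rw [injective_iff_map_eq_zero]
  intro x hx
  ext g₀
  have h1 : ∑ w : G, x.coeff w • Phi (G := G) φ (w * g₀⁻¹) = 0 := by
    have h1 := congrArg (fun T : Module.End Aᵐᵒᵖ (FunH (G := G) φ) =>
      ((T (testFun φ g₀) : FunH (G := G) φ) : G → A) 1) hx
    simp only [iotaHom, MonoidAlgebra.lift_apply] at h1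
    rw [Finsupp.sum_fintype _ _ (fun w => by simp)] at h1
    simpa [iota, iotaMonoidHom, testFun, LinearMap.sum_apply, LinearMap.smul_apply,
      Finset.sum_apply] using h1
  have h2 : ∑ w : G, x.coeff (w * g₀) • Phi (G := G) φ w = 0 := by
    rw [← h1]
    exact Fintype.sum_equiv (Equiv.mulRight g₀) _ _ (fun w => by simp)
  have h3 : ∑ h : H, x.coeff (↑h * g₀) • (φ h : A) = 0 := by
    rw [← h2]
    rw [← Finset.sum_filter_of_ne (p := fun w => w ∈ H)
      (f := fun w => x.coeff (w * g₀) • Phi (G := G) φ w)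
      (fun w _ hne => by
        by_contra hm
        exact hne (by simp [Phi, dif_neg hm])),
      Finset.sum_subtype (p := (· ∈ H)) (Finset.univ.filter (· ∈ H)) (by simp)
        (fun w => x.coeff (w * g₀) • Phi (G := G) φ w)]
    refine Finset.sum_congr rfl fun h _ => ?_
    simp [Phi, dif_pos h.2]
  have hy : (∑ h : H, MonoidAlgebra.single (R := ℂ) h (x.coeff (↑h * g₀))) = 0 := by
    apply hφ
    rw [map_sum, map_zero]
    simpa [MonoidAlgebra.lift_single] using h3
  have hy1 := congrArg (fun y : MonoidAlgebra ℂ H => y.coeff 1) hy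
  rw [MonoidAlgebra.coeff_sum, Finsupp.finset_sum_apply] at hy1
  simpa [Finsupp.single_apply, Finset.sum_ite_eq', Finset.sum_ite_eq] using hy1

end Statements
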